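/- arXiv:2302.11990 — 2 statements merged into one kernel-verified Lean document; each statement's English description precedes it below -/
import Mathlib

section
/- Cusp condition implies Property (A): if Ω = {(x̄, x_N) ∈ ℝ^N : x_N < φ(x̄)} where φ: ℝ^{N−1} → ℝ satisfies |φ(x̄) − φ(ȳ)| ≤ M |x̄ − ȳ|^γ for all x̄, ȳ, then there exists c > 0 depending only on N, γ, M such that |B_γ(x,r) ∩ Ω| ≥ c r^{N_γ} for all x ∈ Ω̄ and all r > 0. -/
open MeasureTheory Set ENNReal

noncomputable section

abbrev Pt (n : ℕ) := EuclideanSpace ℝ (Fin n) × ℝ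

def deltaG {n : ℕ} (γ : ℝ) (x y : Pt n) : ℝ :=
  max (‖x.1 - y.1‖ ^ γ) |x.2 - y.2|

def ballG {n : ℕ} (γ : ℝ) (x : Pt n) (r : ℝ) : Set (Pt n) :=
  {y | deltaG γ x y < r}

/-- Cusp condition implies Property (A): if `Ω = {x_N < φ(x̄)}` with `φ` γ-Hölder of
constant `M`, then there is `c > 0` depending only on `N, γ, M` with
`|B_γ(x,r) ∩ Ω| ≥ c r^{N_γ}` for all `x ∈ Ω̄` and `r > 0`. -/
theorem stmt10 (n : ℕ) (hn : 1 ≤ n) (γ M : ℝ) (hγ : γ ∈ Set.Ioc (0:ℝ) 1) (hM : 0 ≤ M)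
    (φ : EuclideanSpace ℝ (Fin n) → ℝ)
    (hφ : ∀ u v : EuclideanSpace ℝ (Fin n), |φ u - φ v| ≤ M * ‖u - v‖ ^ γ) :
    ∃ c : ℝ, 0 < c ∧
      ∀ x ∈ closure {w : Pt n | w.2 < φ w.1}, ∀ r : ℝ, 0 < r →
        ENNReal.ofReal (c * r ^ ((n : ℝ) / γ + 1)) ≤
          volume (ballG γ x r ∩ {w : Pt n | w.2 < φ w.1}) := by
  obtain ⟨hγ0, hγ1⟩ := hγ
  set K : ℝ := 2 * (M + 1) with hK
  have hK0 : (0:ℝ) < K := by positivity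
  have hK1 : (1:ℝ) ≤ K := by nlinarith
  haveI : Nontrivial (EuclideanSpace ℝ (Fin n)) := by
    refine ⟨EuclideanSpace.single (⟨0, hn⟩ : Fin n) (1:ℝ), 0, ?_⟩
    intro h
    have := congrArg (fun v : EuclideanSpace ℝ (Fin n) => v (⟨0, hn⟩ : Fin n)) h
    simp [EuclideanSpace.single] at this
  have hVpos : 0 < volume (Metric.ball (0:EuclideanSpace ℝ (Fin n)) 1) :=
    Metric.measure_ball_pos _ _ one_pos
  have hVlt : volume (Metric.ball (0:EuclideanSpace ℝ (Fin n)) 1) < ⊤ :=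
    measure_ball_lt_top
  set V : ℝ := (volume (Metric.ball (0:EuclideanSpace ℝ (Fin n)) 1)).toReal with hV
  have hV0 : 0 < V := ENNReal.toReal_pos hVpos.ne' hVlt.ne
  -- continuity of φ
  have hφc : Continuous φ := by
    have : HolderWith ⟨M, hM⟩ ⟨γ, hγ0.le⟩ φ := by
      intro u v
      rw [edist_dist, edist_dist, Real.dist_eq, dist_eq_norm]
      calc ENNReal.ofReal |φ u - φ v| ≤ ENNReal.ofReal (M * ‖u - v‖ ^ γ) :=
            ENNReal.ofReal_le_ofReal (hφ u v)
        _ = _ := by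
            rw [ENNReal.ofReal_mul hM,
              ← ENNReal.ofReal_rpow_of_nonneg (norm_nonneg _) hγ0.le,
              ENNReal.ofReal_eq_coe_nnreal hM]
            rfl
    exact this.continuous hγ0
  have hclosed : IsClosed {w : Pt n | w.2 ≤ φ w.1} :=
    isClosed_le continuous_snd (hφc.comp continuous_fst)
  refine ⟨(1/K) ^ ((n:ℝ)/γ) * V / 2, by positivity, ?_⟩
  intro x hx r hr
  have hxle : x.2 ≤ φ x.1 := by
    have h := closure_mono (show {w : Pt n | w.2 < φ w.1} ⊆ {w : Pt n | w.2 ≤ φ w.1}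
      from fun w hw => (le_of_lt hw : w.2 ≤ φ w.1)) hx
    rwa [hclosed.closure_eq] at h
  set ρ : ℝ := (r / K) ^ (1/γ) with hρ
  have hρ0 : 0 < ρ := Real.rpow_pos_of_pos (by positivity) _
  have hργ : ρ ^ γ = r / K := by
    rw [hρ, ← Real.rpow_mul (by positivity), one_div, inv_mul_cancel₀ hγ0.ne',
      Real.rpow_one]
  have hMργ : M * ρ ^ γ ≤ r / 2 := by
    rw [hργ, mul_div_assoc', div_le_div_iff₀ hK0 two_pos, hK]
    nlinarith
  have hMργ0 : 0 ≤ M * ρ ^ γ := by positivity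
  have hsub : (Metric.ball x.1 ρ) ×ˢ (Set.Ioo (x.2 - r) (x.2 - M * ρ ^ γ)) ⊆
      ballG γ x r ∩ {w : Pt n | w.2 < φ w.1} := by
    rintro ⟨w1, w2⟩ ⟨hw1, hw2l, hw2r⟩
    have hn1 : ‖x.1 - w1‖ < ρ := by
      rw [norm_sub_rev]; exact mem_ball_iff_norm.mp hw1
    have hn1γ : ‖x.1 - w1‖ ^ γ < r := by
      calc ‖x.1 - w1‖ ^ γ < ρ ^ γ :=
            Real.rpow_lt_rpow (norm_nonneg _) hn1 hγ0
        _ = r / K := hργ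
        _ ≤ r := by
            rw [div_le_iff₀ hK0]; nlinarith
    constructor
    · show max (‖x.1 - w1‖ ^ γ) |x.2 - w2| < r
      refine max_lt hn1γ ?_
      rw [abs_lt]
      constructor <;> simp only [neg_lt, lt_sub_iff_add_lt] at * <;> nlinarith
    · show w2 < φ w1
      have h1 : φ x.1 - φ w1 ≤ M * ‖x.1 - w1‖ ^ γ :=
        le_trans (le_abs_self _) (hφ x.1 w1)
      have h2 : M * ‖x.1 - w1‖ ^ γ ≤ M * ρ ^ γ := by
        refine mul_le_mul_of_nonneg_left ?_ hM
        exact (Real.rpow_lt_rpow (norm_nonneg _) hn1 hγ0).le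
      nlinarith
  refine le_trans ?_ (measure_mono hsub)
  rw [show (volume : Measure (Pt n)) = (volume : Measure (EuclideanSpace ℝ (Fin n))).prod volume from rfl,
    Measure.prod_prod, Real.volume_Ioo, Measure.addHaar_ball _ _ hρ0.le,
    finrank_euclideanSpace, Fintype.card_fin]
  have hρn : (ρ : ℝ) ^ n = (r / K) ^ ((n:ℝ)/γ) := by
    rw [← Real.rpow_natCast ρ n, hρ, ← Real.rpow_mul (by positivity)]
    congr 1
    field_simp
  have key : (1/K) ^ ((n:ℝ)/γ) * V / 2 * r ^ ((n:ℝ)/γ + 1) = ρ ^ n * V * (r/2) := by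
    have hKne : K ^ ((n:ℝ)/γ) ≠ 0 := (Real.rpow_pos_of_pos hK0 _).ne'
    rw [hρn, Real.rpow_add hr, Real.rpow_one, Real.div_rpow hr.le hK0.le,
      Real.div_rpow (by norm_num) hK0.le, Real.one_rpow]
    field_simp
  rw [key]
  have step1 : ENNReal.ofReal (ρ ^ n * V * (r/2)) =
      ENNReal.ofReal (ρ ^ n) * ENNReal.ofReal V * ENNReal.ofReal (r/2) := by
    rw [ENNReal.ofReal_mul (by positivity), ENNReal.ofReal_mul (by positivity)]
  rw [step1]
  have h1 : ENNReal.ofReal V ≤ volume (Metric.ball (0:EuclideanSpace ℝ (Fin n)) 1) := by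
    rw [hV, ENNReal.ofReal_toReal hVlt.ne]
  have h2 : ENNReal.ofReal (r/2) ≤ ENNReal.ofReal (x.2 - M * ρ ^ γ - (x.2 - r)) := by
    apply ENNReal.ofReal_le_ofReal; linarith
  exact mul_le_mul' (mul_le_mul' le_rfl h1) h2
end
end

section
/- Hölder implied by Campanato (supercritical statement instance): let Ω ⊂ ℝ² be Ω = {(x₁,x₂) : 0 < x₂ < 1 − |x₁|^γ} with γ ∈ (0,1), let 1 < λ ≤ 1 + 1/(γ+1), α = (1 + 1/γ)(λ−1), and f(x) = sign(x₁)|x₁|^{γα}. Then f ∉ L^λ_{1,1}(Ω) (classical Campanato with Euclidean metric): for squares Q_r = (−r,r)×(0,2r) ⊂ Ω, f_{Q_r} = 0 and |Q_r|^{−λ} ∫_{Q_r} |f| = C(λ,γ) r^{(γ−1)(λ−1)} → ∞ as r → 0. -/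
open MeasureTheory Set Filter

noncomputable section

/-- The squares `Q_r = (-r,r) × (0,2r)`. -/
def Qsq (r : ℝ) : Set (ℝ × ℝ) := Set.Ioo (-r) r ×ˢ Set.Ioo (0 : ℝ) (2 * r)

/-- Integral of an odd function over a symmetric interval vanishes. -/
lemma odd_setIntegral_zero (g : ℝ → ℝ) (hg : ∀ x, g (-x) = -g x) (r : ℝ) :
    ∫ x in Set.Ioo (-r) r, g x = 0 := by
  have A : MeasurableEmbedding fun x : ℝ => -x :=
    (Homeomorph.neg ℝ).isClosedEmbedding.measurableEmbedding
  have h := MeasurableEmbedding.setIntegral_map (μ := volume) A g (Set.Ioo (-r) r)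
  rw [Measure.map_neg_eq_self (volume : Measure ℝ)] at h
  have hpre : (fun x : ℝ => -x) ⁻¹' Set.Ioo (-r) r = Set.Ioo (-r) r := by
    ext x; constructor <;> (intro hx; constructor) <;>
      simp only [Set.mem_preimage, Set.mem_Ioo] at * <;> linarith [hx.1, hx.2]
  rw [hpre] at h
  have h2 : ∫ x in Set.Ioo (-r) r, g (-x) = -∫ x in Set.Ioo (-r) r, g x := by
    simp_rw [hg]; exact integral_neg g
  rw [h2] at h
  linarith

/-- Integral of `|x|^p` over `(-r, r)`. -/
lemma abs_rpow_setIntegral (p r : ℝ) (hp : 0 < p) (hr : 0 < r) :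
    ∫ x in Set.Ioo (-r) r, |x| ^ p = 2 * (r ^ (p + 1) / (p + 1)) := by
  have hcont : Continuous fun x : ℝ => |x| ^ p :=
    continuous_abs.rpow_const fun x => Or.inr hp.le
  have hle : (-r : ℝ) ≤ r := by linarith
  rw [← integral_Ioc_eq_integral_Ioo, ← intervalIntegral.integral_of_le hle]
  have hsplit : (∫ x in (-r)..(0:ℝ), |x| ^ p) + ∫ x in (0:ℝ)..r, |x| ^ p
      = ∫ x in (-r)..r, |x| ^ p :=
    intervalIntegral.integral_add_adjacent_intervals
      (hcont.intervalIntegrable _ _) (hcont.intervalIntegrable _ _)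
  have h1 : (∫ x in (0:ℝ)..r, |x| ^ p) = r ^ (p + 1) / (p + 1) := by
    have e : (∫ x in (0:ℝ)..r, |x| ^ p) = ∫ x in (0:ℝ)..r, x ^ p := by
      apply intervalIntegral.integral_congr
      intro x hx
      rw [Set.uIcc_of_le (by linarith : (0:ℝ) ≤ r)] at hx
      show |x| ^ p = x ^ p
      rw [abs_of_nonneg hx.1]
    rw [e, integral_rpow (Or.inl (by linarith : (-1:ℝ) < p)),
      Real.zero_rpow (by positivity : p + 1 ≠ 0)]
    ring
  have h2 : (∫ x in (-r)..(0:ℝ), |x| ^ p) = r ^ (p + 1) / (p + 1) := by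
    have e1 : (∫ x in (-r)..(0:ℝ), |x| ^ p) = ∫ x in (-r)..(0:ℝ), (-x) ^ p := by
      apply intervalIntegral.integral_congr
      intro x hx
      rw [Set.uIcc_of_le (by linarith : (-r:ℝ) ≤ 0)] at hx
      show |x| ^ p = (-x) ^ p
      rw [abs_of_nonpos hx.2]
    have e2 : (∫ x in (-r)..(0:ℝ), (-x) ^ p) = ∫ x in (0:ℝ)..r, x ^ p := by
      have := intervalIntegral.integral_comp_neg (a := -r) (b := 0) (fun x : ℝ => x ^ p)
      simpa using this
    rw [e1, e2, integral_rpow (Or.inl (by linarith : (-1:ℝ) < p)),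
      Real.zero_rpow (by positivity : p + 1 ≠ 0)]
    ring
  rw [← hsplit, h1, h2]; ring

/-- Failure of the classical (Euclidean) Campanato embedding on the cusp domain
`Ω = {0 < x₂ < 1 - |x₁|^γ}`: for `γ ∈ (0,1)`, `1 < λ ≤ 1 + 1/(γ+1)`,
`α = (1 + 1/γ)(λ-1)` and `f(x) = sign(x₁)|x₁|^{γα}`, the means of `f` over the squares
`Q_r = (-r,r) × (0,2r) ⊆ Ω` vanish, while
`|Q_r|^{-λ} ∫_{Q_r} |f| = C(λ,γ) r^{(γ-1)(λ-1)} → ∞` as `r → 0⁺`; hence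
`f ∉ L^λ_{1,1}(Ω)`. -/
theorem stmt17 (γ lam : ℝ) (hγ : γ ∈ Set.Ioo (0:ℝ) 1)
    (hlam : lam ∈ Set.Ioc (1:ℝ) (1 + 1 / (γ + 1)))
    (f : ℝ × ℝ → ℝ)
    (hf : f = fun x => Real.sign x.1 * |x.1| ^ (γ * ((1 + 1 / γ) * (lam - 1)))) :
    (∀ r : ℝ, 0 < r → Qsq r ⊆ {x : ℝ × ℝ | 0 < x.2 ∧ x.2 < 1 - |x.1| ^ γ} →
      (⨍ x in Qsq r, f x = 0) ∧
      (volume (Qsq r)).toReal ^ (-lam) * ∫ x in Qsq r, |f x| =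
        (4 ^ (1 - lam) / ((γ + 1) * (lam - 1) + 1)) * r ^ ((γ - 1) * (lam - 1))) ∧
    Tendsto (fun r : ℝ => (volume (Qsq r)).toReal ^ (-lam) * ∫ x in Qsq r, |f x|)
      (nhdsWithin 0 (Set.Ioi 0)) atTop := by
  obtain ⟨hγ0, hγ1⟩ := hγ
  obtain ⟨hlam1, hlam2⟩ := hlam
  set p : ℝ := (γ + 1) * (lam - 1) with hp_def
  have hp : 0 < p := by apply mul_pos <;> linarith
  have hexp : γ * ((1 + 1 / γ) * (lam - 1)) = p := by
    rw [hp_def]; field_simp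
  have hf' : f = fun x : ℝ × ℝ => Real.sign x.1 * |x.1| ^ p := by rw [hf, hexp]
  -- |f| as a product function
  have habsf : ∀ x : ℝ × ℝ, |f x| = |x.1| ^ p * 1 := by
    intro x
    rw [hf']
    show |Real.sign x.1 * |x.1| ^ p| = |x.1| ^ p * 1
    rcases lt_trichotomy x.1 0 with h | h | h
    · rw [Real.sign_of_neg h, abs_mul, abs_of_nonneg (Real.rpow_nonneg (abs_nonneg _) p)]
      simp
    · simp [h, Real.zero_rpow hp.ne']
    · rw [Real.sign_of_pos h, abs_mul, abs_of_nonneg (Real.rpow_nonneg (abs_nonneg _) p)]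
      simp
  -- volume of the square
  have hvol : ∀ r : ℝ, 0 < r → (volume (Qsq r)).toReal = 2 * r * (2 * r) := by
    intro r hr
    rw [Qsq, Measure.volume_eq_prod, Measure.prod_prod, Real.volume_Ioo, Real.volume_Ioo,
      ← ENNReal.ofReal_mul (by linarith), ENNReal.toReal_ofReal (by nlinarith)]
    ring_nf
  -- the key computation, valid for all r > 0
  have key : ∀ r : ℝ, 0 < r →
      (volume (Qsq r)).toReal ^ (-lam) * ∫ x in Qsq r, |f x| =
        (4 ^ (1 - lam) / ((γ + 1) * (lam - 1) + 1)) * r ^ ((γ - 1) * (lam - 1)) := by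
    intro r hr
    have hint : ∫ x in Qsq r, |f x| = (2 * (r ^ (p + 1) / (p + 1))) * (2 * r) := by
      calc ∫ x in Qsq r, |f x|
          = ∫ x in (Set.Ioo (-r) r) ×ˢ (Set.Ioo (0:ℝ) (2*r)),
              (fun a : ℝ => |a| ^ p) x.1 * (fun _ : ℝ => (1:ℝ)) x.2 := by
            rw [Qsq]
            exact setIntegral_congr_fun
              ((measurableSet_Ioo).prod measurableSet_Ioo) fun x _ => habsf x
        _ = (∫ a in Set.Ioo (-r) r, |a| ^ p) * ∫ _ in Set.Ioo (0:ℝ) (2*r), (1:ℝ) := by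
            rw [Measure.volume_eq_prod]
            exact setIntegral_prod_mul (fun a : ℝ => |a| ^ p) (fun _ : ℝ => (1:ℝ)) _ _
        _ = (2 * (r ^ (p + 1) / (p + 1))) * (2 * r) := by
            rw [abs_rpow_setIntegral p r hp hr]
            congr 1
            rw [setIntegral_const, Real.volume_real_Ioo_of_le (by linarith), smul_eq_mul, mul_one]
            ring
    rw [hint, hvol r hr]
    have A : (2 * r * (2 * r)) ^ (-lam) = 4 ^ (-lam) * r ^ (-(2 * lam)) := by
      rw [show 2 * r * (2 * r) = 4 * (r * r) by ring,
        Real.mul_rpow (by norm_num) (by positivity),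
        show r * r = r ^ ((2:ℕ):ℝ) by rw [Real.rpow_natCast]; ring,
        ← Real.rpow_mul hr.le]
      norm_num
    have B : r ^ (-(2 * lam)) * r ^ (p + 1) * r = r ^ ((γ - 1) * (lam - 1)) := by
      calc r ^ (-(2 * lam)) * r ^ (p + 1) * r
          = r ^ (-(2 * lam)) * r ^ (p + 1) * r ^ (1:ℝ) := by rw [Real.rpow_one]
        _ = r ^ (-(2 * lam) + (p + 1) + 1) := by
            rw [← Real.rpow_add hr, ← Real.rpow_add hr]
        _ = r ^ ((γ - 1) * (lam - 1)) := by
            congr 1; rw [hp_def]; ring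
    have C4 : (4 : ℝ) ^ (1 - lam) = 4 * 4 ^ (-lam) := by
      rw [show (1 : ℝ) - lam = 1 + (-lam) by ring,
        Real.rpow_add (by norm_num : (0:ℝ) < 4), Real.rpow_one]
    rw [A, ← hp_def, C4, ← B]
    ring
  constructor
  · intro r hr _
    refine ⟨?_, key r hr⟩
    -- mean value zero
    have hodd : ∀ x : ℝ, Real.sign (-x) * |(-x)| ^ p = -(Real.sign x * |x| ^ p) := by
      intro x
      rcases lt_trichotomy x 0 with h | h | h
      · rw [Real.sign_of_neg h, Real.sign_of_pos (by linarith : 0 < -x), abs_neg]; ring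
      · simp [h]
      · rw [Real.sign_of_pos h, Real.sign_of_neg (by linarith : -x < 0), abs_neg]; ring
    have hzero : ∫ x in Qsq r, f x = 0 := by
      calc ∫ x in Qsq r, f x
          = ∫ x in (Set.Ioo (-r) r) ×ˢ (Set.Ioo (0:ℝ) (2*r)),
              (fun a : ℝ => Real.sign a * |a| ^ p) x.1 * (fun _ : ℝ => (1:ℝ)) x.2 := by
            rw [Qsq]
            refine setIntegral_congr_fun
              ((measurableSet_Ioo).prod measurableSet_Ioo) fun x _ => ?_
            rw [hf']; simp
        _ = (∫ a in Set.Ioo (-r) r, Real.sign a * |a| ^ p)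
              * ∫ _ in Set.Ioo (0:ℝ) (2*r), (1:ℝ) := by
            rw [Measure.volume_eq_prod]
            exact setIntegral_prod_mul (fun a : ℝ => Real.sign a * |a| ^ p)
              (fun _ : ℝ => (1:ℝ)) _ _
        _ = 0 := by
            rw [odd_setIntegral_zero _ hodd r, zero_mul]
    rw [setAverage_eq, hzero, smul_zero]
  · -- the blow-up
    have he : (γ - 1) * (lam - 1) < 0 :=
      mul_neg_of_neg_of_pos (by linarith) (by linarith)
    set C : ℝ := 4 ^ (1 - lam) / ((γ + 1) * (lam - 1) + 1) with hC_def
    have hC : 0 < C := by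
      apply div_pos (Real.rpow_pos_of_pos (by norm_num) _)
      rw [← hp_def]; linarith
    have h1 : Tendsto (fun r : ℝ => r ^ ((γ - 1) * (lam - 1)))
        (nhdsWithin 0 (Set.Ioi 0)) atTop := by
      have h2 : Tendsto (fun r : ℝ => (r⁻¹) ^ (-((γ - 1) * (lam - 1))))
          (nhdsWithin 0 (Set.Ioi 0)) atTop :=
        (tendsto_rpow_atTop (by linarith)).comp tendsto_inv_nhdsGT_zero
      apply h2.congr'
      filter_upwards [self_mem_nhdsWithin] with r hr
      rw [Set.mem_Ioi] at hr
      rw [← Real.rpow_neg_one r, ← Real.rpow_mul hr.le]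
      ring_nf
    have h3 := h1.const_mul_atTop hC
    apply h3.congr'
    filter_upwards [self_mem_nhdsWithin] with r hr
    rw [Set.mem_Ioi] at hr
    exact (key r hr).symm
end
end
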